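/- Let Ω ⊂ ℝ^d be a bounded measurable set, let (p_n) be a sequence in [1,2) increasing to 2, and let v_n : Ω → ℝ^μ be measurable with sup_n ∫_Ω |v_n|^{p_n} < +∞. Assume that v : Ω → ℝ^μ is measurable and that for every p ∈ (1,2), for all sufficiently large n the functions v_n belong to L^p(Ω; ℝ^μ) and v_n converges to v weakly in L^p(Ω; ℝ^μ). Then ∫_Ω |v|² ≤ liminf_{n→∞} ∫_Ω |v_n|^{p_n}. -/

import Mathlib

open MeasureTheory Filter ENNReal
open scoped RealInnerProductSpace
open scoped NNReal

private lemma tendsto_rpow_exponent {x : ℝ≥0∞} (hx0 : x ≠ 0) (hxt : x ≠ ⊤)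
    {e : ℕ → ℝ} {e₀ : ℝ} (he : Tendsto e atTop (nhds e₀)) :
    Tendsto (fun k => x ^ e k) atTop (nhds (x ^ e₀)) := by
  have hxr : 0 < x.toReal := ENNReal.toReal_pos hx0 hxt
  have h1 : ∀ s : ℝ, x ^ s = ENNReal.ofReal (x.toReal ^ s) := by
    intro s
    rw [← ENNReal.ofReal_rpow_of_pos hxr, ENNReal.ofReal_toReal hxt]
  simp_rw [h1]
  refine (ENNReal.continuous_ofReal.tendsto _).comp ?_
  have h2 : ∀ s : ℝ, x.toReal ^ s = Real.exp (Real.log x.toReal * s) := fun s =>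
    Real.rpow_def_of_pos hxr s
  simp_rw [h2]
  exact (Real.continuous_exp.tendsto _).comp (he.const_mul _)

private lemma liminf_mul_le_of_tendsto {a b : ℕ → ℝ≥0∞} {B : ℝ≥0∞} (hB : B ≠ ⊤)
    (hA : liminf a atTop ≠ ⊤) (hb : Tendsto b atTop (nhds B)) :
    liminf (fun n => a n * b n) atTop ≤ liminf a atTop * B := by
  set A := liminf a atTop with hAdef
  refine ENNReal.le_of_forall_pos_le_add fun ε hε hfin => ?_
  set δ : ℝ≥0∞ := if A = 0 then 1 else ε / A with hδdef
  have hδ0 : δ ≠ 0 := by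
    rw [hδdef]
    split_ifs with h
    · exact one_ne_zero
    · simp [ENNReal.div_eq_zero_iff, hA, (by exact_mod_cast hε.ne' : (ε:ℝ≥0∞) ≠ 0)]
  have hAδ : A * δ ≤ ε := by
    rw [hδdef]
    split_ifs with h
    · simp [h]
    · rw [ENNReal.mul_div_cancel h hA]
  have hδtop : δ ≠ ⊤ := by
    rw [hδdef]; split_ifs with h
    · exact one_ne_top
    · exact (ENNReal.div_lt_top coe_ne_top h).ne
  have hev : ∀ᶠ n in atTop, b n ≤ B + δ := by
    refine hb.eventually_le_const ?_
    exact ENNReal.lt_add_right hB hδ0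
  have h1 : liminf (fun n => a n * b n) atTop ≤ liminf (fun n => a n * (B + δ)) atTop := by
    refine liminf_le_liminf (hev.mono fun n hn => ?_)
    exact mul_le_mul_right hn _
  have h2 : liminf (fun n => a n * (B + δ)) atTop = A * (B + δ) := by
    have hmono : Monotone (fun x : ℝ≥0∞ => x * (B + δ)) := fun x y h => mul_le_mul_left h _
    have hcont : ContinuousAt (fun x : ℝ≥0∞ => x * (B + δ)) A :=
      ENNReal.Tendsto.mul_const tendsto_id (Or.inr (ENNReal.add_ne_top.2 ⟨hB, hδtop⟩))
    exact (hmono.map_liminf_of_continuousAt a hcont).symm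
  calc liminf (fun n => a n * b n) atTop ≤ A * (B + δ) := h1.trans h2.le
    _ = A * B + A * δ := by rw [mul_add]
    _ ≤ A * B + ε := add_le_add_right hAδ _

theorem fatou_varying_exponents (d m : ℕ)
    (Ω : Set (EuclideanSpace ℝ (Fin d))) (hΩb : Bornology.IsBounded Ω)
    (hΩm : MeasurableSet Ω)
    (p : ℕ → ℝ) (hp : ∀ n, p n ∈ Set.Ico (1:ℝ) 2) (hpmono : Monotone p)
    (hptend : Tendsto p atTop (nhds 2))
    (v : ℕ → EuclideanSpace ℝ (Fin d) → EuclideanSpace ℝ (Fin m))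
    (hvmeas : ∀ n, Measurable (v n))
    (hbound : (⨆ n, ∫⁻ x in Ω, (‖v n x‖₊ : ℝ≥0∞) ^ (p n) ∂volume) < ⊤)
    (w : EuclideanSpace ℝ (Fin d) → EuclideanSpace ℝ (Fin m)) (hwmeas : Measurable w)
    (hweakLp : ∀ q : ℝ, 1 < q → q < 2 →
      ∀ᶠ n in atTop, MemLp (v n) (ENNReal.ofReal q) (volume.restrict Ω))
    (hweak : ∀ q : ℝ, 1 < q → q < 2 →
      ∀ g : EuclideanSpace ℝ (Fin d) → EuclideanSpace ℝ (Fin m),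
        MemLp g (ENNReal.ofReal (q / (q - 1))) (volume.restrict Ω) →
        Tendsto (fun n => ∫ x in Ω, ⟪v n x, g x⟫) atTop
          (nhds (∫ x in Ω, ⟪w x, g x⟫))) :
    ∫⁻ x in Ω, (‖w x‖₊ : ℝ≥0∞) ^ (2:ℝ) ∂volume ≤
      liminf (fun n => ∫⁻ x in Ω, (‖v n x‖₊ : ℝ≥0∞) ^ (p n) ∂volume) atTop := by
  by_cases hΩ0 : volume Ω = 0
  · rw [Measure.restrict_eq_zero.mpr hΩ0]
    simp
  have hΩfin : volume Ω ≠ ⊤ := hΩb.measure_lt_top.ne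
  haveI hfinmeas : IsFiniteMeasure (volume.restrict Ω) :=
    ⟨by rw [Measure.restrict_apply_univ]; exact hΩb.measure_lt_top⟩
  set I : ℕ → ℝ≥0∞ := fun n => ∫⁻ x in Ω, (‖v n x‖₊ : ℝ≥0∞) ^ (p n) ∂volume with hIdef
  set L := liminf I atTop with hLdef
  set M : ℝ≥0∞ := max 1 (⨆ n, I n) with hMdef
  have hM_top : M ≠ ⊤ := by
    rw [hMdef]; simp [hbound.ne]
  have hM0 : M ≠ 0 := by rw [hMdef]; simp
  have hIM : ∀ n, I n ≤ M := fun n => le_max_of_le_right (le_iSup I n)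
  have hItop : ∀ n, I n ≠ ⊤ := fun n => ((hIM n).trans_lt hM_top.lt_top).ne
  have hL_top : L ≠ ⊤ := by
    have hLM : L ≤ M := by
      have h := liminf_le_liminf ((Eventually.of_forall hIM : ∀ᶠ n in atTop, I n ≤ M))
      rwa [liminf_const] at h
    exact (hLM.trans_lt hM_top.lt_top).ne
  have hp1 : ∀ n, 1 ≤ p n := fun n => (hp n).1
  have hp2 : ∀ n, p n < 2 := fun n => (hp n).2
  have hp0 : ∀ n, 0 < p n := fun n => lt_of_lt_of_le one_pos (hp1 n)
  -- the key truncated estimate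
  have key : ∀ R : ℕ, (∫⁻ x in Ω,
      ({x | ‖w x‖ ≤ (R:ℝ)}.indicator (fun x => (‖w x‖₊ : ℝ≥0∞) ^ (2:ℝ))) x ∂volume) ≤ L := by
    intro R
    set S : Set (EuclideanSpace ℝ (Fin d)) := {x | ‖w x‖ ≤ (R:ℝ)} with hSdef
    have hSm : MeasurableSet S := measurableSet_le hwmeas.norm measurable_const
    set g : EuclideanSpace ℝ (Fin d) → EuclideanSpace ℝ (Fin m) := S.indicator w with hgdef
    have hgmeas : Measurable g := hwmeas.indicator hSm
    have hgbound : ∀ x, ‖g x‖ ≤ (R:ℝ) := by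
      intro x
      by_cases hx : x ∈ S
      · rw [hgdef, Set.indicator_of_mem hx]; exact hx
      · rw [hgdef, Set.indicator_of_notMem hx]; simp
    have hind_meas : Measurable (fun x => S.indicator (fun y => (‖w y‖₊ : ℝ≥0∞) ^ (2:ℝ)) x) :=
      (ENNReal.continuous_rpow_const.measurable.comp hwmeas.nnnorm.coe_nnreal_ennreal).indicator hSm
    set J : ℝ≥0∞ := ∫⁻ x in Ω, S.indicator (fun y => (‖w y‖₊ : ℝ≥0∞) ^ (2:ℝ)) x ∂volume with hJdef
    show J ≤ L
    by_cases hJ0 : J = 0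
    · rw [hJ0]; exact zero_le
    have hwK : ∀ x ∈ S, (‖w x‖₊ : ℝ≥0∞) ≤ (R : ℝ≥0∞) := by
      intro x hx
      have h1 : ‖w x‖₊ ≤ (R : ℝ≥0) := by
        rw [← NNReal.coe_le_coe]
        push_cast
        exact hx
      exact_mod_cast ENNReal.coe_le_coe.mpr h1
    have hJtop : J ≠ ⊤ := by
      have hle : J ≤ ((R:ℝ≥0∞) ^ (2:ℝ)) * volume Ω := by
        rw [hJdef]
        calc ∫⁻ x in Ω, S.indicator (fun y => (‖w y‖₊ : ℝ≥0∞) ^ (2:ℝ)) x ∂volume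
            ≤ ∫⁻ _ in Ω, (R:ℝ≥0∞) ^ (2:ℝ) ∂volume := by
              refine lintegral_mono fun x => ?_
              by_cases hx : x ∈ S
              · rw [Set.indicator_of_mem hx]
                exact ENNReal.rpow_le_rpow (hwK x hx) (by norm_num)
              · rw [Set.indicator_of_notMem hx]; exact zero_le
          _ = (R:ℝ≥0∞) ^ (2:ℝ) * volume Ω := by
              rw [lintegral_const, Measure.restrict_apply_univ]
      refine (hle.trans_lt ?_).ne
      exact ENNReal.mul_lt_top
        (ENNReal.rpow_ne_top_of_nonneg (by norm_num) (ENNReal.natCast_ne_top R)).lt_top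
        hΩfin.lt_top
    have hgLp : ∀ s : ℝ≥0∞, MemLp g s (volume.restrict Ω) := fun s =>
      MemLp.of_bound hgmeas.aestronglyMeasurable (R:ℝ) (Eventually.of_forall hgbound)
    have hwg : ∀ x, ⟪w x, g x⟫ = S.indicator (fun y => ‖w y‖ ^ 2) x := by
      intro x
      by_cases hx : x ∈ S
      · rw [hgdef, Set.indicator_of_mem hx, Set.indicator_of_mem hx,
          real_inner_self_eq_norm_sq]
      · rw [hgdef, Set.indicator_of_notMem hx, Set.indicator_of_notMem hx, inner_zero_right]
    have hIw : (∫ x in Ω, ⟪w x, g x⟫) = J.toReal := by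
      rw [integral_congr_ae (Eventually.of_forall hwg)]
      rw [integral_eq_lintegral_of_nonneg_ae
        (Eventually.of_forall fun x => Set.indicator_nonneg (fun y _ => sq_nonneg _) x)
        ((hwmeas.norm.pow_const 2).indicator hSm).aestronglyMeasurable]
      rw [hJdef]
      congr 1
      refine lintegral_congr fun x => ?_
      by_cases hx : x ∈ S
      · rw [Set.indicator_of_mem hx, Set.indicator_of_mem hx]
        rw [← enorm_eq_nnnorm, ← ofReal_norm, show ((2:ℝ)) = ((2:ℕ):ℝ) by norm_num,
          ENNReal.rpow_natCast, ENNReal.ofReal_pow (norm_nonneg _)]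
      · rw [Set.indicator_of_notMem hx, Set.indicator_of_notMem hx, ENNReal.ofReal_zero]
    have htendJ : Tendsto (fun n => ENNReal.ofReal (∫ x in Ω, ⟪v n x, g x⟫)) atTop (nhds J) := by
      have h1 := hweak (3/2) (by norm_num) (by norm_num) g (hgLp _)
      rw [hIw] at h1
      have h2 := (ENNReal.continuous_ofReal.tendsto _).comp h1
      rwa [ENNReal.ofReal_toReal hJtop] at h2
    have hJliminf : J = liminf (fun n => ENNReal.ofReal (∫ x in Ω, ⟪v n x, g x⟫)) atTop :=
      htendJ.liminf_eq.symm
    set K : ℝ≥0∞ := max 1 (R:ℝ≥0∞) with hKdef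
    have hK0 : K ≠ 0 := by rw [hKdef]; simp
    have hKtop : K ≠ ⊤ := by rw [hKdef]; simp [ENNReal.natCast_ne_top]
    have hGle : ∀ q' : ℝ, 2 ≤ q' →
        (∫⁻ x in Ω, (‖g x‖₊:ℝ≥0∞) ^ q' ∂volume) ≤ K ^ (q'-2) * J := by
      intro q' hq'
      have hpt : ∀ x, (‖g x‖₊:ℝ≥0∞) ^ q' ≤
          K ^ (q'-2) * S.indicator (fun y => (‖w y‖₊:ℝ≥0∞) ^ (2:ℝ)) x := by
        intro x
        by_cases hx : x ∈ S
        · rw [hgdef, Set.indicator_of_mem hx, Set.indicator_of_mem hx]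
          by_cases hw0 : (‖w x‖₊:ℝ≥0∞) = 0
          · rw [hw0, ENNReal.zero_rpow_of_pos (by linarith)]
            exact zero_le
          · have hsplit : (‖w x‖₊:ℝ≥0∞) ^ q'
                = (‖w x‖₊:ℝ≥0∞) ^ (q'-2) * (‖w x‖₊:ℝ≥0∞) ^ (2:ℝ) := by
              rw [← ENNReal.rpow_add _ _ hw0 coe_ne_top]; ring_nf
            rw [hsplit]
            refine mul_le_mul_left (ENNReal.rpow_le_rpow ?_ (by linarith)) _
            exact le_trans (hwK x hx) (le_max_right _ _)
        · rw [hgdef, Set.indicator_of_notMem hx, Set.indicator_of_notMem hx]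
          simp [ENNReal.zero_rpow_of_pos (by linarith : (0:ℝ) < q')]
      calc (∫⁻ x in Ω, (‖g x‖₊:ℝ≥0∞) ^ q' ∂volume)
          ≤ ∫⁻ x in Ω, K ^ (q'-2) * S.indicator (fun y => (‖w y‖₊:ℝ≥0∞) ^ (2:ℝ)) x ∂volume :=
            lintegral_mono hpt
        _ = K ^ (q'-2) * J := by rw [lintegral_const_mul _ hind_meas]
    have hqbound : ∀ q : ℝ, 1 < q → q < 2 →
        J ≤ L ^ (1/2:ℝ) * (1 * (volume Ω ^ (1/q - 1/2) *
          (K ^ (q/(q-1) - 2) * J) ^ (1/(q/(q-1))))) := by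
      intro q hq1 hq2
      set q' : ℝ := q/(q-1) with hq'def
      have hqq' : q.HolderConjugate q' := Real.HolderConjugate.conjExponent hq1
      have hq'2 : (2:ℝ) ≤ q' := by
        rw [hq'def, le_div_iff₀ (by linarith)]; nlinarith
      have hq'pos : (0:ℝ) < q' := by linarith
      set Cq : ℝ≥0∞ := (K ^ (q' - 2) * J) ^ (1/q') with hCqdef
      have hCq_top : Cq ≠ ⊤ := by
        refine ENNReal.rpow_ne_top_of_nonneg (by positivity) ?_
        exact ENNReal.mul_ne_top (ENNReal.rpow_ne_top_of_nonneg (by linarith) hKtop) hJtop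
      set b : ℕ → ℝ≥0∞ :=
        fun n => M ^ (1/(p n) - 1/2) * (volume Ω ^ (1/q - 1/(p n)) * Cq) with hbdef
      have hev : ∀ᶠ n in atTop,
          ENNReal.ofReal (∫ x in Ω, ⟪v n x, g x⟫) ≤ I n ^ (1/2:ℝ) * b n := by
        have hevq : ∀ᶠ n in atTop, q ≤ p n := hptend.eventually_const_le hq2
        refine hevq.mono fun n hqn => ?_
        have hinner_meas : AEStronglyMeasurable (fun x => ⟪v n x, g x⟫) (volume.restrict Ω) :=
          ((hvmeas n).inner hgmeas).aestronglyMeasurable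
        have s1 : ENNReal.ofReal (∫ x in Ω, ⟪v n x, g x⟫)
            ≤ ∫⁻ x in Ω, (‖v n x‖₊ : ℝ≥0∞) * ‖g x‖₊ ∂volume := by
          have h1 : (∫ x in Ω, ⟪v n x, g x⟫) ≤ ∫ x in Ω, ‖⟪v n x, g x⟫‖ :=
            le_trans (le_abs_self _)
              (by rw [← Real.norm_eq_abs]; exact norm_integral_le_integral_norm _)
          calc ENNReal.ofReal (∫ x in Ω, ⟪v n x, g x⟫)
              ≤ ENNReal.ofReal (∫ x in Ω, ‖⟪v n x, g x⟫‖) := ENNReal.ofReal_le_ofReal h1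
            _ = ENNReal.ofReal (∫⁻ x in Ω, (‖⟪v n x, g x⟫‖₊ : ℝ≥0∞) ∂volume).toReal := by
                rw [integral_norm_eq_lintegral_enorm hinner_meas]; simp only [enorm_eq_nnnorm]
            _ ≤ ∫⁻ x in Ω, (‖⟪v n x, g x⟫‖₊ : ℝ≥0∞) ∂volume := ENNReal.ofReal_toReal_le
            _ ≤ ∫⁻ x in Ω, (‖v n x‖₊ : ℝ≥0∞) * ‖g x‖₊ ∂volume := by
                refine lintegral_mono fun x => ?_
                rw [← ENNReal.coe_mul]
                exact ENNReal.coe_le_coe.mpr (nnnorm_inner_le_nnnorm _ _)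
        have s2 : (∫⁻ x in Ω, (‖v n x‖₊ : ℝ≥0∞) * ‖g x‖₊ ∂volume)
            ≤ (∫⁻ x in Ω, (‖v n x‖₊:ℝ≥0∞) ^ q ∂volume) ^ (1/q)
              * (∫⁻ x in Ω, (‖g x‖₊:ℝ≥0∞) ^ q' ∂volume) ^ (1/q') :=
          ENNReal.lintegral_mul_le_Lp_mul_Lq _ hqq'
            (hvmeas n).nnnorm.coe_nnreal_ennreal.aemeasurable hgmeas.nnnorm.coe_nnreal_ennreal.aemeasurable
        have s3 : (∫⁻ x in Ω, (‖v n x‖₊:ℝ≥0∞) ^ q ∂volume) ^ (1/q)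
            ≤ I n ^ (1/(p n)) * volume Ω ^ (1/q - 1/(p n)) := by
          have h := eLpNorm'_le_eLpNorm'_mul_rpow_measure_univ (μ := volume.restrict Ω)
            (f := v n) (by linarith : (0:ℝ) < q) hqn (hvmeas n).aestronglyMeasurable
          simpa [eLpNorm', Measure.restrict_apply_univ, enorm_eq_nnnorm] using h
        have s4 : I n ^ (1/(p n)) ≤ I n ^ (1/2:ℝ) * M ^ (1/(p n) - 1/2) := by
          by_cases hIn0 : I n = 0
          · rw [hIn0, ENNReal.zero_rpow_of_pos (one_div_pos.mpr (hp0 n))]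
            exact zero_le
          · have : I n ^ (1/(p n)) = I n ^ (1/2:ℝ) * I n ^ (1/(p n) - 1/2) := by
              rw [← ENNReal.rpow_add _ _ hIn0 (hItop n)]; ring_nf
            rw [this]
            refine mul_le_mul_right (ENNReal.rpow_le_rpow (hIM n) ?_) _
            have : 1/2 ≤ 1/(p n) := by
              rw [div_le_div_iff₀ (by norm_num) (hp0 n)]
              linarith [hp2 n]
            linarith
        have s5 : (∫⁻ x in Ω, (‖g x‖₊:ℝ≥0∞) ^ q' ∂volume) ^ (1/q') ≤ Cq :=
          ENNReal.rpow_le_rpow (hGle q' hq'2) (by positivity)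
        calc ENNReal.ofReal (∫ x in Ω, ⟪v n x, g x⟫)
            ≤ (∫⁻ x in Ω, (‖v n x‖₊:ℝ≥0∞) ^ q ∂volume) ^ (1/q)
              * (∫⁻ x in Ω, (‖g x‖₊:ℝ≥0∞) ^ q' ∂volume) ^ (1/q') := s1.trans s2
          _ ≤ ((I n ^ (1/2:ℝ) * M ^ (1/(p n) - 1/2)) * volume Ω ^ (1/q - 1/(p n))) * Cq := by
              gcongr
              exact s3.trans (mul_le_mul_left s4 _)
          _ = I n ^ (1/2:ℝ) * b n := by rw [hbdef]; ring
      have h6 : J ≤ liminf (fun n => I n ^ (1/2:ℝ) * b n) atTop := by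
        rw [hJliminf]; exact liminf_le_liminf hev
      have hinvp : Tendsto (fun n => 1/(p n)) atTop (nhds (1/2)) :=
        tendsto_const_nhds.div hptend two_ne_zero
      have he1 : Tendsto (fun n => 1/(p n) - 1/2) atTop (nhds 0) := by
        have := hinvp.sub (tendsto_const_nhds (x := (1/2:ℝ)))
        simpa using this
      have he2 : Tendsto (fun n => 1/q - 1/(p n)) atTop (nhds (1/q - 1/2)) :=
        tendsto_const_nhds.sub hinvp
      have t1 : Tendsto (fun n => M ^ (1/(p n) - 1/2)) atTop (nhds 1) := by
        have := tendsto_rpow_exponent hM0 hM_top he1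
        rwa [ENNReal.rpow_zero] at this
      have t2 : Tendsto (fun n => volume Ω ^ (1/q - 1/(p n))) atTop
          (nhds (volume Ω ^ (1/q - 1/2))) := tendsto_rpow_exponent hΩ0 hΩfin he2
      have hVq_top : volume Ω ^ (1/q - 1/2) ≠ ⊤ := by
        refine ENNReal.rpow_ne_top_of_nonneg ?_ hΩfin
        have : 1/2 ≤ 1/q := by
          rw [div_le_div_iff₀ (by norm_num) (by linarith : (0:ℝ) < q)]
          linarith
        linarith
      have hB_top : (1:ℝ≥0∞) * (volume Ω ^ (1/q - 1/2) * Cq) ≠ ⊤ :=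
        ENNReal.mul_ne_top one_ne_top (ENNReal.mul_ne_top hVq_top hCq_top)
      have hBtend : Tendsto b atTop (nhds ((1:ℝ≥0∞) * (volume Ω ^ (1/q - 1/2) * Cq))) := by
        rw [hbdef]
        exact ENNReal.Tendsto.mul t1 (Or.inl one_ne_zero)
          (ENNReal.Tendsto.mul_const t2 (Or.inr hCq_top)) (Or.inr one_ne_top)
      have h8 : liminf (fun n => I n ^ (1/2:ℝ)) atTop = L ^ (1/2:ℝ) := by
        have hmono : Monotone (fun x : ℝ≥0∞ => x ^ (1/2:ℝ)) :=
          fun a b h => ENNReal.rpow_le_rpow h (by norm_num)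
        exact (hmono.map_liminf_of_continuousAt I
          ENNReal.continuous_rpow_const.continuousAt).symm
      have hlim_ne_top : liminf (fun n => I n ^ (1/2:ℝ)) atTop ≠ ⊤ := by
        rw [h8]; exact ENNReal.rpow_ne_top_of_nonneg (by norm_num) hL_top
      have h7 := liminf_mul_le_of_tendsto hB_top hlim_ne_top hBtend
      rw [h8] at h7
      exact h6.trans h7
    -- let q ↑ 2 along the sequence Q k = 2 - 1/(k+2)
    set Q : ℕ → ℝ := fun k => 2 - 1/((k:ℝ)+2) with hQdef
    have hk2 : ∀ k : ℕ, (0:ℝ) < (k:ℝ) + 2 := fun k => by positivity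
    have hQ1 : ∀ k, 1 < Q k := by
      intro k
      have h2k : (2:ℝ) ≤ (k:ℝ) + 2 := by
        have : (0:ℝ) ≤ (k:ℝ) := Nat.cast_nonneg k
        linarith
      have := one_div_le_one_div_of_le (by norm_num : (0:ℝ) < 2) h2k
      rw [hQdef]
      simp only
      linarith
    have hQ2 : ∀ k, Q k < 2 := by
      intro k
      rw [hQdef]
      simp only
      have := one_div_pos.mpr (hk2 k)
      linarith
    have hQtend : Tendsto Q atTop (nhds 2) := by
      have h1 : Tendsto (fun k : ℕ => ((k:ℝ)+2)) atTop atTop :=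
        tendsto_atTop_add_const_right atTop 2 tendsto_natCast_atTop_atTop
      have h2 : Tendsto (fun k : ℕ => 1/((k:ℝ)+2)) atTop (nhds 0) := by
        simpa [one_div, Pi.inv_def] using h1.inv_tendsto_atTop
      rw [hQdef]
      simpa using tendsto_const_nhds.sub h2
    set Q' : ℕ → ℝ := fun k => Q k/(Q k - 1) with hQ'def
    have hQ'tend : Tendsto Q' atTop (nhds 2) := by
      have h1 : Tendsto (fun k => Q k - 1) atTop (nhds 1) := by
        have := hQtend.sub (tendsto_const_nhds (x := (1:ℝ)))
        norm_num at this
        exact this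
      have := hQtend.div h1 one_ne_zero
      simpa [Pi.div_def] using this
    have hQ'2 : ∀ k, (2:ℝ) ≤ Q' k := by
      intro k
      rw [hQ'def]
      simp only
      rw [le_div_iff₀ (by linarith [hQ1 k])]
      nlinarith [hQ1 k, hQ2 k]
    have hub : ∀ k, J ≤ L ^ (1/2:ℝ) * (1 * (volume Ω ^ (1/(Q k) - 1/2) *
        (K ^ (Q' k - 2) * J) ^ (1/(Q' k)))) := fun k => hqbound (Q k) (hQ1 k) (hQ2 k)
    have hdecomp : ∀ k, (K ^ (Q' k - 2) * J) ^ (1/(Q' k))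
        = K ^ ((Q' k - 2)*(1/(Q' k))) * J ^ (1/(Q' k)) := by
      intro k
      rw [ENNReal.mul_rpow_of_ne_top (ENNReal.rpow_ne_top_of_nonneg (by linarith [hQ'2 k]) hKtop)
        hJtop, ← ENNReal.rpow_mul]
    -- limits of exponents
    have hinvQ : Tendsto (fun k => 1/(Q k)) atTop (nhds (1/2)) :=
      tendsto_const_nhds.div hQtend two_ne_zero
    have hinvQ' : Tendsto (fun k => 1/(Q' k)) atTop (nhds (1/2)) :=
      tendsto_const_nhds.div hQ'tend two_ne_zero
    have hea : Tendsto (fun k => 1/(Q k) - 1/2) atTop (nhds 0) := by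
      have := hinvQ.sub (tendsto_const_nhds (x := (1/2:ℝ)))
      simpa using this
    have heb : Tendsto (fun k => (Q' k - 2)*(1/(Q' k))) atTop (nhds 0) := by
      have h1 : Tendsto (fun k => Q' k - 2) atTop (nhds 0) := by
        have := hQ'tend.sub (tendsto_const_nhds (x := (2:ℝ)))
        simpa using this
      have := h1.mul hinvQ'
      simpa using this
    have ta : Tendsto (fun k => volume Ω ^ (1/(Q k) - 1/2)) atTop (nhds 1) := by
      have := tendsto_rpow_exponent hΩ0 hΩfin hea
      rwa [ENNReal.rpow_zero] at this
    have tb : Tendsto (fun k => K ^ ((Q' k - 2)*(1/(Q' k)))) atTop (nhds 1) := by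
      have := tendsto_rpow_exponent hK0 hKtop heb
      rwa [ENNReal.rpow_zero] at this
    have tc : Tendsto (fun k => J ^ (1/(Q' k))) atTop (nhds (J ^ (1/2:ℝ))) :=
      tendsto_rpow_exponent hJ0 hJtop hinvQ'
    have hJhalf_top : J ^ (1/2:ℝ) ≠ ⊤ := ENNReal.rpow_ne_top_of_nonneg (by norm_num) hJtop
    have hLhalf_top : L ^ (1/2:ℝ) ≠ ⊤ := ENNReal.rpow_ne_top_of_nonneg (by norm_num) hL_top
    have htendRHS : Tendsto (fun k => L ^ (1/2:ℝ) * (1 * (volume Ω ^ (1/(Q k) - 1/2) *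
        (K ^ ((Q' k - 2)*(1/(Q' k))) * J ^ (1/(Q' k)))))) atTop
        (nhds (L ^ (1/2:ℝ) * J ^ (1/2:ℝ))) := by
      have inner2 : Tendsto (fun k => K ^ ((Q' k - 2)*(1/(Q' k))) * J ^ (1/(Q' k))) atTop
          (nhds ((1:ℝ≥0∞) * J ^ (1/2:ℝ))) :=
        ENNReal.Tendsto.mul tb (Or.inl one_ne_zero) tc (Or.inr one_ne_top)
      have inner1 : Tendsto (fun k => volume Ω ^ (1/(Q k) - 1/2) *
          (K ^ ((Q' k - 2)*(1/(Q' k))) * J ^ (1/(Q' k)))) atTop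
          (nhds ((1:ℝ≥0∞) * ((1:ℝ≥0∞) * J ^ (1/2:ℝ)))) :=
        ENNReal.Tendsto.mul ta (Or.inl one_ne_zero) inner2 (Or.inr one_ne_top)
      have inner0 : Tendsto (fun k => (1:ℝ≥0∞) * (volume Ω ^ (1/(Q k) - 1/2) *
          (K ^ ((Q' k - 2)*(1/(Q' k))) * J ^ (1/(Q' k))))) atTop
          (nhds ((1:ℝ≥0∞) * ((1:ℝ≥0∞) * ((1:ℝ≥0∞) * J ^ (1/2:ℝ))))) :=
        ENNReal.Tendsto.const_mul inner1 (Or.inr one_ne_top)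
      have := ENNReal.Tendsto.const_mul inner0 (Or.inr hLhalf_top)
      simpa using this
    have hfinal : J ≤ L ^ (1/2:ℝ) * J ^ (1/2:ℝ) := by
      refine ge_of_tendsto' htendRHS fun k => ?_
      have := hub k
      rwa [hdecomp k] at this
    have hJhalf0 : J ^ (1/2:ℝ) ≠ 0 := by
      simp [ENNReal.rpow_eq_zero_iff, hJ0, hJtop]
    have hhalf : J ^ (1/2:ℝ) ≤ L ^ (1/2:ℝ) := by
      rw [← ENNReal.mul_le_mul_iff_left hJhalf0 hJhalf_top]
      calc J ^ (1/2:ℝ) * J ^ (1/2:ℝ) = J := by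
            rw [← ENNReal.rpow_add _ _ hJ0 hJtop]; norm_num
        _ ≤ L ^ (1/2:ℝ) * J ^ (1/2:ℝ) := hfinal
    calc J = (J ^ (1/2:ℝ)) ^ (2:ℝ) := by rw [← ENNReal.rpow_mul]; norm_num
      _ ≤ (L ^ (1/2:ℝ)) ^ (2:ℝ) := ENNReal.rpow_le_rpow hhalf (by norm_num)
      _ = L := by rw [← ENNReal.rpow_mul]; norm_num
  -- monotone convergence in R
  set F : ℕ → EuclideanSpace ℝ (Fin d) → ℝ≥0∞ := fun R x =>
    ({x | ‖w x‖ ≤ (R:ℝ)}.indicator (fun x => (‖w x‖₊ : ℝ≥0∞) ^ (2:ℝ))) x with hFdef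
  have hFmeas : ∀ R : ℕ, Measurable (F R) := by
    intro R
    have hS : MeasurableSet {x | ‖w x‖ ≤ (R:ℝ)} := measurableSet_le hwmeas.norm measurable_const
    exact (ENNReal.continuous_rpow_const.measurable.comp hwmeas.nnnorm.coe_nnreal_ennreal).indicator hS
  have hFmono : Monotone F := by
    intro R R' hRR x
    refine Set.indicator_le_indicator_of_subset ?_ (fun _ => zero_le) x
    intro y hy
    have hy' : ‖w y‖ ≤ (R:ℝ) := hy
    exact Set.mem_setOf.mpr (le_trans hy' (Nat.cast_le.mpr hRR))
  have hptwise : ∀ x, (‖w x‖₊ : ℝ≥0∞) ^ (2:ℝ) = ⨆ R : ℕ, F R x := by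
    intro x
    refine le_antisymm ?_ (iSup_le fun R => Set.indicator_le_self _ _ x)
    obtain ⟨R, hR⟩ := exists_nat_ge ‖w x‖
    refine le_iSup_of_le R ?_
    show _ ≤ ({x | ‖w x‖ ≤ (R:ℝ)}.indicator (fun x => (‖w x‖₊ : ℝ≥0∞) ^ (2:ℝ))) x
    rw [Set.indicator_of_mem (by exact hR : x ∈ {x | ‖w x‖ ≤ (R:ℝ)})]
  calc ∫⁻ x in Ω, (‖w x‖₊ : ℝ≥0∞) ^ (2:ℝ) ∂volume
      = ∫⁻ x in Ω, ⨆ R : ℕ, F R x ∂volume := lintegral_congr fun x => hptwise x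
    _ = ⨆ R : ℕ, ∫⁻ x in Ω, F R x ∂volume := lintegral_iSup hFmeas hFmono
    _ ≤ L := iSup_le key
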